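/- Let d ≥ 7 be an integer and T ∈ ℝ. The function u_T^*(t,x) = −a_d/(b_d(T−t)² + |x|²) is smooth on (ℝ × ℝ^d) ∖ {(T,0)} and solves the Yang-Mills wave equation: for every (t,x) ∈ ℝ × ℝ^d with (t,x) ≠ (T,0), one has −∂_t² u_T^*(t,x) + Δ_x u_T^*(t,x) = (d−4)(|x|² u_T^*(t,x)³ + 3 u_T^*(t,x)²). -/

import Mathlib

open Real

noncomputable def ad (d : ℕ) : ℝ :=
  2 * (1 + Real.sqrt (((d : ℝ) - 6) / (3 * ((d : ℝ) - 4))))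

noncomputable def bd (d : ℕ) : ℝ :=
  (1 / 3) * (2 * ((d : ℝ) - 6) + Real.sqrt (3 * ((d : ℝ) - 4) * ((d : ℝ) - 6)))

/-- The self-similar blowup profile `u_T^*`. -/
noncomputable def uStar (d : ℕ) (T : ℝ) (t : ℝ) (x : EuclideanSpace ℝ (Fin d)) : ℝ :=
  -(ad d) / (bd d * (T - t) ^ 2 + ‖x‖ ^ 2)

/-- The Euclidean Laplacian of a scalar function, as a sum of second directional
derivatives in the coordinate directions. -/
noncomputable def lap (d : ℕ) (f : EuclideanSpace ℝ (Fin d) → ℝ)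
    (x : EuclideanSpace ℝ (Fin d)) : ℝ :=
  ∑ i : Fin d,
    iteratedFDeriv ℝ 2 f x ![EuclideanSpace.single i 1, EuclideanSpace.single i 1]

section Aux

open scoped RealInnerProductSpace

/-! ### Algebraic facts about `ad`, `bd` -/

lemma sqrt_fact {d : ℕ} (hd : 7 ≤ d) :
    Real.sqrt (3 * ((d : ℝ) - 4) * ((d : ℝ) - 6))
      = 3 * ((d : ℝ) - 4) * Real.sqrt (((d : ℝ) - 6) / (3 * ((d : ℝ) - 4))) := by
  have he : (7 : ℝ) ≤ (d : ℝ) := by exact_mod_cast hd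
  set s := Real.sqrt (((d : ℝ) - 6) / (3 * ((d : ℝ) - 4))) with hs
  have hs2 : s ^ 2 = ((d : ℝ) - 6) / (3 * ((d : ℝ) - 4)) := by
    rw [hs, Real.sq_sqrt (div_nonneg (by linarith) (by linarith))]
  have h4 : (3 : ℝ) * ((d : ℝ) - 4) ≠ 0 := by nlinarith
  have : (3 * ((d : ℝ) - 4) * s) ^ 2 = 3 * ((d : ℝ) - 4) * ((d : ℝ) - 6) := by
    rw [mul_pow, hs2]
    field_simp
  rw [← this, Real.sqrt_sq (mul_nonneg (by linarith) (Real.sqrt_nonneg _))]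

lemma hs2' {d : ℕ} (hd : 7 ≤ d) :
    3 * ((d : ℝ) - 4) * (Real.sqrt (((d : ℝ) - 6) / (3 * ((d : ℝ) - 4)))) ^ 2
      = (d : ℝ) - 6 := by
  have he : (7 : ℝ) ≤ (d : ℝ) := by exact_mod_cast hd
  have h4 : (3 : ℝ) * ((d : ℝ) - 4) ≠ 0 := by nlinarith
  rw [Real.sq_sqrt (div_nonneg (by linarith) (by linarith))]
  field_simp
  exact mul_div_cancel_left₀ _ (by linarith)

lemma hA {d : ℕ} (hd : 7 ≤ d) : 6 * bd d + 2 * (d : ℝ) = 3 * ((d : ℝ) - 4) * ad d := by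
  unfold ad bd
  rw [sqrt_fact hd]
  ring

lemma hB {d : ℕ} (hd : 7 ≤ d) : 8 * (bd d + 1) = ((d : ℝ) - 4) * (ad d) ^ 2 := by
  have h := hs2' hd
  unfold ad bd
  rw [sqrt_fact hd]
  linear_combination (-4/3 : ℝ) * h

lemma bd_pos {d : ℕ} (hd : 7 ≤ d) : 0 < bd d := by
  have he : (7 : ℝ) ≤ (d : ℝ) := by exact_mod_cast hd
  have h := Real.sqrt_nonneg (3 * ((d : ℝ) - 4) * ((d : ℝ) - 6))
  unfold bd
  nlinarith

lemma Q_pos {d : ℕ} (hd : 7 ≤ d) {T t : ℝ} {x : EuclideanSpace ℝ (Fin d)}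
    (h : (t, x) ≠ (T, (0 : EuclideanSpace ℝ (Fin d)))) :
    0 < bd d * (T - t) ^ 2 + ‖x‖ ^ 2 := by
  have hb := bd_pos hd
  rcases eq_or_ne x 0 with rfl | hx
  · have ht : t ≠ T := by
      intro h'
      exact h (by rw [h'])
    have h2 : T - t ≠ 0 := sub_ne_zero.mpr (Ne.symm ht)
    have h3 : 0 < (T - t) ^ 2 :=
      lt_of_le_of_ne (sq_nonneg _) (Ne.symm (pow_ne_zero 2 h2))
    nlinarith [sq_nonneg ‖(0 : EuclideanSpace ℝ (Fin d))‖]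
  · have : 0 < ‖x‖ := norm_pos_iff.mpr hx
    nlinarith [sq_nonneg (T - t)]

/-! ### Spatial derivatives -/

variable {d : ℕ}

lemma hasFDerivAt_F (a c : ℝ) (x : EuclideanSpace ℝ (Fin d)) (h : c + ‖x‖ ^ 2 ≠ 0) :
    HasFDerivAt (fun y : EuclideanSpace ℝ (Fin d) => -a / (c + ‖y‖ ^ 2))
      ((a * ((c + ‖x‖ ^ 2) ^ 2)⁻¹) • ((2:ℕ) • innerSL ℝ x)) x := by
  have hq : HasFDerivAt (fun y : EuclideanSpace ℝ (Fin d) => c + ‖y‖ ^ 2)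
      ((2:ℕ) • innerSL ℝ x) x :=
    (hasStrictFDerivAt_norm_sq x).hasFDerivAt.const_add c
  have hinv := (hasDerivAt_inv h).comp_hasFDerivAt x hq
  have hmul := hinv.const_mul (-a)
  have : HasFDerivAt (fun y : EuclideanSpace ℝ (Fin d) => -a * (c + ‖y‖ ^ 2)⁻¹)
      ((-a) • ((-((c + ‖x‖ ^ 2) ^ 2)⁻¹) • ((2:ℕ) • innerSL ℝ x))) x := hmul
  have heq : (fun y : EuclideanSpace ℝ (Fin d) => -a / (c + ‖y‖ ^ 2))
      = fun y : EuclideanSpace ℝ (Fin d) => -a * (c + ‖y‖ ^ 2)⁻¹ := by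
    funext y; rw [div_eq_mul_inv]
  rw [heq]
  convert this using 1
  ext v
  simp [smul_smul]

/-- Second directional derivative of `y ↦ -a/(c+‖y‖²)`. -/
lemma second_dir_deriv (a c : ℝ) (hc : 0 ≤ c) (x : EuclideanSpace ℝ (Fin d))
    (h : c + ‖x‖ ^ 2 ≠ 0) (i : Fin d) :
    iteratedFDeriv ℝ 2 (fun y : EuclideanSpace ℝ (Fin d) => -a / (c + ‖y‖ ^ 2)) x
      ![EuclideanSpace.single i 1, EuclideanSpace.single i 1]
      = 2 * a * ((c + ‖x‖ ^ 2) ^ 2)⁻¹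
        - 8 * a * (x i) ^ 2 * ((c + ‖x‖ ^ 2) ^ 3)⁻¹ := by
  set F : EuclideanSpace ℝ (Fin d) → ℝ := fun y => -a / (c + ‖y‖ ^ 2) with hF
  set e : EuclideanSpace ℝ (Fin d) := EuclideanSpace.single i 1 with he
  -- basic facts about the open set where the denominator doesn't vanish
  have hU : IsOpen {y : EuclideanSpace ℝ (Fin d) | c + ‖y‖ ^ 2 ≠ 0} :=
    isOpen_compl_singleton.preimage (by continuity)
  have hUx : {y : EuclideanSpace ℝ (Fin d) | c + ‖y‖ ^ 2 ≠ 0} ∈ nhds x := hU.mem_nhds h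
  -- F is C² near x
  have hcd : ContDiffAt ℝ 2 F x := by
    apply ContDiffAt.div contDiffAt_const
    · exact contDiffAt_const.add (contDiff_norm_sq ℝ).contDiffAt
    · exact h
  have hd1 : DifferentiableAt ℝ (fderiv ℝ F) x :=
    (hcd.fderiv_right (m := 1) (by norm_num)).differentiableAt (by norm_num)
  rw [iteratedFDeriv_two_apply]
  simp only [Matrix.cons_val_zero, Matrix.cons_val_one, Matrix.head_cons]
  -- exchange: fderiv (fderiv F) x e e = fderiv (fun y => fderiv F y e) x e
  have hexch : fderiv ℝ (fun y => fderiv ℝ F y e) x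
      = (fderiv ℝ (fderiv ℝ F) x).flip e := by
    have := fderiv_clm_apply (c := fderiv ℝ F) (u := fun _ => e) hd1
      (differentiableAt_const e)
    simpa using this
  have hval : fderiv ℝ (fderiv ℝ F) x e e
      = fderiv ℝ (fun y => fderiv ℝ F y e) x e := by
    rw [hexch]; rfl
  rw [hval]
  -- the function y ↦ fderiv F y e agrees near x with an explicit function
  have hev : (fun y => fderiv ℝ F y e)
      =ᶠ[nhds x] fun y => (2 * a * (((c + ‖y‖ ^ 2) ^ 2)⁻¹)) * ((innerSL ℝ e) y) := by
    filter_upwards [hUx] with y hy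
    have hfd := (hasFDerivAt_F a c y hy).fderiv
    rw [hF, hfd]
    simp only [ContinuousLinearMap.smul_apply, smul_eq_mul, nsmul_eq_mul,
      innerSL_apply_apply, Nat.cast_ofNat]
    rw [real_inner_comm]
    ring
  rw [hev.fderiv_eq]
  -- differentiate the explicit function
  set Qx : ℝ := c + ‖x‖ ^ 2 with hQx
  have hq : HasFDerivAt (fun y : EuclideanSpace ℝ (Fin d) => c + ‖y‖ ^ 2)
      ((2:ℕ) • innerSL ℝ x) x :=
    (hasStrictFDerivAt_norm_sq x).hasFDerivAt.const_add c
  have hz : HasDerivAt (fun z : ℝ => 2 * a * (z ^ 2)⁻¹)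
      (2 * a * (-(2 * Qx ^ 1 * 1) / (Qx ^ 2) ^ 2)) Qx := by
    exact (((hasDerivAt_id Qx).pow 2).inv (pow_ne_zero 2 h)).const_mul (2 * a)
  have hh : HasFDerivAt (fun y : EuclideanSpace ℝ (Fin d) => 2 * a * ((c + ‖y‖ ^ 2) ^ 2)⁻¹)
      ((2 * a * (-(2 * Qx ^ 1 * 1) / (Qx ^ 2) ^ 2)) • ((2:ℕ) • innerSL ℝ x)) x :=
    hz.comp_hasFDerivAt (f := fun y : EuclideanSpace ℝ (Fin d) => c + ‖y‖ ^ 2) x hq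
  have hphi := hh.mul ((innerSL ℝ e).hasFDerivAt (x := x))
  rw [show (fun y : EuclideanSpace ℝ (Fin d) => 2 * a * ((c + ‖y‖ ^ 2) ^ 2)⁻¹ * (innerSL ℝ e) y)
      = (fun y => 2 * a * ((c + ‖y‖ ^ 2) ^ 2)⁻¹) * ⇑(innerSL ℝ e) from rfl, hphi.fderiv]
  have hee : (innerSL ℝ e) e = (1 : ℝ) := by
    simp [he, EuclideanSpace.inner_single_left, EuclideanSpace.single_apply]
  have hex : (innerSL ℝ e) x = x i := by
    simp [he, EuclideanSpace.inner_single_left]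
  have hxe : (innerSL ℝ x) e = x i := by
    simp [he, EuclideanSpace.inner_single_right]
  simp only [ContinuousLinearMap.add_apply, ContinuousLinearMap.coe_smul', Pi.smul_apply,
    ContinuousLinearMap.smul_apply, hee, hex, hxe, smul_eq_mul, nsmul_eq_mul]
  simp only [← hQx]
  field_simp
  ring

/-- The Laplacian of `y ↦ -a/(c+‖y‖²)`. -/
lemma lap_formula (a c : ℝ) (hc : 0 ≤ c) (x : EuclideanSpace ℝ (Fin d))
    (h : c + ‖x‖ ^ 2 ≠ 0) :
    lap d (fun y : EuclideanSpace ℝ (Fin d) => -a / (c + ‖y‖ ^ 2)) x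
      = 2 * (d : ℝ) * a * ((c + ‖x‖ ^ 2) ^ 2)⁻¹
        - 8 * a * ‖x‖ ^ 2 * ((c + ‖x‖ ^ 2) ^ 3)⁻¹ := by
  unfold lap
  have hsum : ∑ i : Fin d, (x i) ^ 2 = ‖x‖ ^ 2 := by
    rw [PiLp.norm_sq_eq_of_L2]
    congr 1
    funext i
    rw [Real.norm_eq_abs, sq_abs]
  calc ∑ i : Fin d, iteratedFDeriv ℝ 2 (fun y : EuclideanSpace ℝ (Fin d) => -a / (c + ‖y‖ ^ 2)) x
        ![EuclideanSpace.single i 1, EuclideanSpace.single i 1]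
      = ∑ i : Fin d, (2 * a * ((c + ‖x‖ ^ 2) ^ 2)⁻¹
          - 8 * a * (x i) ^ 2 * ((c + ‖x‖ ^ 2) ^ 3)⁻¹) := by
        apply Finset.sum_congr rfl
        intro i _
        exact second_dir_deriv a c hc x h i
    _ = _ := by
        rw [Finset.sum_sub_distrib, Finset.sum_const]
        simp only [Finset.card_univ, Fintype.card_fin, nsmul_eq_mul]
        rw [show ∑ i : Fin d, 8 * a * (x i) ^ 2 * ((c + ‖x‖ ^ 2) ^ 3)⁻¹
            = 8 * a * (∑ i : Fin d, (x i) ^ 2) * ((c + ‖x‖ ^ 2) ^ 3)⁻¹ by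
          rw [Finset.mul_sum, Finset.sum_mul]]
        rw [hsum]
        ring

/-! ### Time derivatives -/

lemma time_inner (a b c T : ℝ) (t' : ℝ) (h : b * (T - t') ^ 2 + c ≠ 0) :
    HasDerivAt (fun s => -a / (b * (T - s) ^ 2 + c))
      (-(2 * a * b) * (T - t') / (b * (T - t') ^ 2 + c) ^ 2) t' := by
  have hq : HasDerivAt (fun s => b * (T - s) ^ 2 + c)
      (b * (2 * (T - t') ^ 1 * -1)) t' := by
    exact ((((hasDerivAt_id t').const_sub T).pow 2).const_mul b).add_const c
  have := (hasDerivAt_const t' (-a)).fun_div hq h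
  refine this.congr_deriv ?_
  ring

lemma time_second (a b c T t : ℝ) (h : b * (T - t) ^ 2 + c ≠ 0) :
    deriv (fun t' => deriv (fun s => -a / (b * (T - s) ^ 2 + c)) t') t
      = 2 * a * b * ((b * (T - t) ^ 2 + c) ^ 2)⁻¹
        - 8 * a * b ^ 2 * (T - t) ^ 2 * ((b * (T - t) ^ 2 + c) ^ 3)⁻¹ := by
  have hU : IsOpen {t' : ℝ | b * (T - t') ^ 2 + c ≠ 0} :=
    isOpen_compl_singleton.preimage (by continuity)
  have hev : (fun t' => deriv (fun s => -a / (b * (T - s) ^ 2 + c)) t')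
      =ᶠ[nhds t] fun t' => -(2 * a * b) * (T - t') / (b * (T - t') ^ 2 + c) ^ 2 := by
    filter_upwards [hU.mem_nhds h] with t' ht'
    exact (time_inner a b c T t' ht').deriv
  rw [hev.deriv_eq]
  have hq : HasDerivAt (fun s => b * (T - s) ^ 2 + c)
      (b * (2 * (T - t) ^ 1 * -1)) t :=
    ((((hasDerivAt_id t).const_sub T).pow 2).const_mul b).add_const c
  have hnum : HasDerivAt (fun t' => -(2 * a * b) * (T - t'))
      (-(2 * a * b) * -1) t := ((hasDerivAt_id t).const_sub T).const_mul _
  have hden : HasDerivAt (fun t' => (b * (T - t') ^ 2 + c) ^ 2)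
      (2 * (b * (T - t) ^ 2 + c) ^ 1 * (b * (2 * (T - t) ^ 1 * -1))) t := hq.pow 2
  have := (hnum.fun_div hden (pow_ne_zero 2 h)).deriv
  rw [this]
  field_simp
  ring

end Aux

theorem uStar_smooth_and_solves (d : ℕ) (hd : 7 ≤ d) (T : ℝ) :
    ContDiffOn ℝ (⊤ : ℕ∞) (fun p : ℝ × EuclideanSpace ℝ (Fin d) => uStar d T p.1 p.2)
      {p : ℝ × EuclideanSpace ℝ (Fin d) | p ≠ (T, 0)} ∧
    ∀ (t : ℝ) (x : EuclideanSpace ℝ (Fin d)),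
      (t, x) ≠ (T, (0 : EuclideanSpace ℝ (Fin d))) →
      -(deriv (fun t' => deriv (fun t'' => uStar d T t'' x) t') t)
          + lap d (fun x' => uStar d T t x') x
        = ((d : ℝ) - 4) * (‖x‖ ^ 2 * (uStar d T t x) ^ 3 + 3 * (uStar d T t x) ^ 2) := by
  constructor
  · -- smoothness
    have hden : ContDiff ℝ (⊤ : ℕ∞)
        (fun p : ℝ × EuclideanSpace ℝ (Fin d) => bd d * (T - p.1) ^ 2 + ‖p.2‖ ^ 2) := by
      apply ContDiff.add
      · exact contDiff_const.mul ((contDiff_const.sub contDiff_fst).pow 2)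
      · exact (contDiff_norm_sq ℝ).comp contDiff_snd
    have := ContDiffOn.div (contDiffOn_const (c := -(ad d)))
      (hden.contDiffOn (s := {p : ℝ × EuclideanSpace ℝ (Fin d) | p ≠ (T, 0)}))
      (fun p hp => by
        have : (p.1, p.2) ≠ (T, (0 : EuclideanSpace ℝ (Fin d))) := by
          simpa using hp
        exact (Q_pos hd this).ne')
    simpa only [uStar, Pi.div_def] using this
  · intro t x hne
    have hQ : bd d * (T - t) ^ 2 + ‖x‖ ^ 2 ≠ 0 := (Q_pos hd hne).ne'
    simp only [uStar]
    rw [time_second (ad d) (bd d) (‖x‖ ^ 2) T t hQ]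
    have hQ' : bd d * (T - t) ^ 2 + ‖x‖ ^ 2 ≠ 0 := hQ
    rw [lap_formula (ad d) (bd d * (T - t) ^ 2) (mul_nonneg (bd_pos hd).le (sq_nonneg _)) x hQ']
    have h1 := hA hd
    have h2 := hB hd
    set a := ad d
    set b := bd d
    field_simp
    linear_combination
      (a * (b * (T - t) ^ 2 + ‖x‖ ^ 2)) * h1
        - (a * ‖x‖ ^ 2) * h2
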